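/- (Proposition 1, maximality, case m < N.) If z, z̄ ∈ ℂ^N and S, S̄ ∈ ℂ^{N×N} are Hermitian positive definite and t₁(z,S) = t₁(z̄,S̄), then there exists (G,f) ∈ 𝓛 such that z = G z̄ + f and S = G S̄ G†. -/

import Mathlib

open Matrix ComplexOrder

/-- The set 𝓖 of block upper-triangular matrices (partition sizes `t`, `r`, `q = N - m`)
with invertible diagonal blocks. -/
def memG (t r q : ℕ) (G : Matrix (Fin t ⊕ Fin r ⊕ Fin q) (Fin t ⊕ Fin r ⊕ Fin q) ℂ) : Prop :=
  (∀ i j, G (Sum.inr i) (Sum.inl j) = 0) ∧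
  (∀ i j, G (Sum.inr (Sum.inr i)) (Sum.inr (Sum.inl j)) = 0) ∧
  IsUnit (G.submatrix Sum.inl Sum.inl) ∧
  IsUnit (G.submatrix (Sum.inr ∘ Sum.inl) (Sum.inr ∘ Sum.inl)) ∧
  IsUnit (G.submatrix (Sum.inr ∘ Sum.inr) (Sum.inr ∘ Sum.inr))

/-- The set 𝓕 of vectors in ℂ^N whose last `N - t` entries are zero. -/
def memF (t r q : ℕ) (f : Fin t ⊕ Fin r ⊕ Fin q → ℂ) : Prop :=
  ∀ i, f (Sum.inr i) = 0

/-- Second block (size `r`) of a partitioned vector. -/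
def blk2 {t r q : ℕ} (z : Fin t ⊕ Fin r ⊕ Fin q → ℂ) : Fin r → ℂ :=
  fun i => z (Sum.inr (Sum.inl i))

/-- Third block (size `q = N - m`) of a partitioned vector. -/
def blk3 {t r q : ℕ} (z : Fin t ⊕ Fin r ⊕ Fin q → ℂ) : Fin q → ℂ :=
  fun i => z (Sum.inr (Sum.inr i))

/-- The `(2,2)` block `S₂₂` of a partitioned matrix. -/
def S22 {t r q : ℕ} (S : Matrix (Fin t ⊕ Fin r ⊕ Fin q) (Fin t ⊕ Fin r ⊕ Fin q) ℂ) :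
    Matrix (Fin r) (Fin r) ℂ :=
  S.submatrix (Sum.inr ∘ Sum.inl) (Sum.inr ∘ Sum.inl)

/-- The `(2,3)` block `S₂₃` of a partitioned matrix. -/
def S23 {t r q : ℕ} (S : Matrix (Fin t ⊕ Fin r ⊕ Fin q) (Fin t ⊕ Fin r ⊕ Fin q) ℂ) :
    Matrix (Fin r) (Fin q) ℂ :=
  S.submatrix (Sum.inr ∘ Sum.inl) (Sum.inr ∘ Sum.inr)

/-- The `(3,2)` block `S₃₂` of a partitioned matrix. -/
def S32 {t r q : ℕ} (S : Matrix (Fin t ⊕ Fin r ⊕ Fin q) (Fin t ⊕ Fin r ⊕ Fin q) ℂ) :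
    Matrix (Fin q) (Fin r) ℂ :=
  S.submatrix (Sum.inr ∘ Sum.inr) (Sum.inr ∘ Sum.inl)

/-- The `(3,3)` block `S₃₃` of a partitioned matrix. -/
def S33 {t r q : ℕ} (S : Matrix (Fin t ⊕ Fin r ⊕ Fin q) (Fin t ⊕ Fin r ⊕ Fin q) ℂ) :
    Matrix (Fin q) (Fin q) ℂ :=
  S.submatrix (Sum.inr ∘ Sum.inr) (Sum.inr ∘ Sum.inr)

/-- `z_{2.3} = z₂ - S₂₃ S₃₃⁻¹ z₃`. -/
noncomputable def zdot {t r q : ℕ} (z : Fin t ⊕ Fin r ⊕ Fin q → ℂ)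
    (S : Matrix (Fin t ⊕ Fin r ⊕ Fin q) (Fin t ⊕ Fin r ⊕ Fin q) ℂ) : Fin r → ℂ :=
  blk2 z - (S23 S * (S33 S)⁻¹) *ᵥ blk3 z

/-- `S_{2.3} = S₂₂ - S₂₃ S₃₃⁻¹ S₃₂`. -/
noncomputable def Sdot {t r q : ℕ}
    (S : Matrix (Fin t ⊕ Fin r ⊕ Fin q) (Fin t ⊕ Fin r ⊕ Fin q) ℂ) :
    Matrix (Fin r) (Fin r) ℂ :=
  S22 S - S23 S * (S33 S)⁻¹ * S32 S

/-- The maximal invariant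
`t₁(z,S) = (z_{2.3}† S_{2.3}⁻¹ z_{2.3}, z₃† S₃₃⁻¹ z₃)` for the case `m < N`. -/
noncomputable def t1 {t r q : ℕ} (z : Fin t ⊕ Fin r ⊕ Fin q → ℂ)
    (S : Matrix (Fin t ⊕ Fin r ⊕ Fin q) (Fin t ⊕ Fin r ⊕ Fin q) ℂ) : ℂ × ℂ :=
  (star (zdot z S) ⬝ᵥ ((Sdot S)⁻¹ *ᵥ zdot z S),
   star (blk3 z) ⬝ᵥ ((S33 S)⁻¹ *ᵥ blk3 z))

section Helpers

variable {ι : Type*} [Fintype ι] [DecidableEq ι]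

lemma exists_unitary (u v : ι → ℂ) (h : star u ⬝ᵥ u = star v ⬝ᵥ v) :
    ∃ U : Matrix ι ι ℂ, U * Uᴴ = 1 ∧ Uᴴ * U = 1 ∧ U *ᵥ u = v := by
  classical
  let eqE : EuclideanSpace ℂ ι ≃ₗ[ℂ] (ι → ℂ) := WithLp.linearEquiv 2 ℂ (ι → ℂ)
  have hinner : ∀ x y : EuclideanSpace ℂ ι,
      (inner ℂ x y : ℂ) = star (eqE x) ⬝ᵥ (eqE y) := by
    intro x y
    simp [PiLp.inner_apply, dotProduct, RCLike.inner_apply, eqE,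
      WithLp.linearEquiv_apply, mul_comm]
  by_cases hu : u = 0
  · have hv0 : (inner ℂ (eqE.symm v) (eqE.symm v) : ℂ) = 0 := by
      rw [hinner]
      simp only [LinearEquiv.apply_symm_apply]
      rw [← h, hu]
      simp
    have hv : v = 0 := by
      have := inner_self_eq_zero.mp hv0
      have h2 := congrArg eqE this
      simpa using h2
    exact ⟨1, by simp, by simp, by simp [hu, hv]⟩
  · have huE : eqE.symm u ≠ 0 := by
      intro h0
      apply hu
      have := congrArg eqE h0
      simpa using this
    have hnn : (inner ℂ (eqE.symm u) (eqE.symm u) : ℂ) = inner ℂ (eqE.symm v) (eqE.symm v) := by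
      rw [hinner, hinner]
      simp only [LinearEquiv.apply_symm_apply]
      exact h
    have hnorm : ‖eqE.symm u‖ = ‖eqE.symm v‖ := by
      have h1 := inner_self_eq_norm_sq (𝕜 := ℂ) (eqE.symm u)
      have h2 := inner_self_eq_norm_sq (𝕜 := ℂ) (eqE.symm v)
      have h3 : ‖eqE.symm u‖ ^ 2 = ‖eqE.symm v‖ ^ 2 := by
        rw [← h1, ← h2, hnn]
      have := congrArg Real.sqrt h3
      rwa [Real.sqrt_sq (norm_nonneg _), Real.sqrt_sq (norm_nonneg _)] at this
    have hvE : eqE.symm v ≠ 0 := by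
      intro h0
      rw [h0, norm_zero, norm_eq_zero] at hnorm
      exact huE hnorm
    obtain ⟨i0, _⟩ : ∃ i : ι, u i ≠ 0 := by
      by_contra hc
      push_neg at hc
      exact hu (funext hc)
    have hON : ∀ x : EuclideanSpace ℂ ι, x ≠ 0 →
        Orthonormal ℂ
          (Set.restrict {i0} (fun _ : ι => ((‖x‖ : ℂ))⁻¹ • x)) := by
      intro x hx
      constructor
      · rintro ⟨i, hi⟩
        show ‖((‖x‖ : ℂ))⁻¹ • x‖ = 1
        rw [norm_smul, norm_inv]
        rw [Complex.norm_real, Real.norm_eq_abs, abs_of_nonneg (norm_nonneg _)]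
        rw [inv_mul_cancel₀ (norm_ne_zero_iff.mpr hx)]
      · rintro ⟨i, hi⟩ ⟨j, hj⟩ hij
        exact absurd (Subtype.ext (hi.trans hj.symm)) hij
    have hcard : Module.finrank ℂ (EuclideanSpace ℂ ι) = Fintype.card ι :=
      finrank_euclideanSpace
    obtain ⟨b, hb⟩ :=
      Orthonormal.exists_orthonormalBasis_extension_of_card_eq (𝕜 := ℂ)
        hcard (hON (eqE.symm u) huE)
    obtain ⟨c, hc⟩ :=
      Orthonormal.exists_orthonormalBasis_extension_of_card_eq (𝕜 := ℂ)
        hcard (hON (eqE.symm v) hvE)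
    let T : EuclideanSpace ℂ ι ≃ₗᵢ[ℂ] EuclideanSpace ℂ ι := b.repr.trans c.repr.symm
    have hTb : T (b i0) = c i0 := by
      simp only [T, LinearIsometryEquiv.trans_apply, OrthonormalBasis.repr_self]
      exact c.repr_symm_single i0
    have hT : T (eqE.symm u) = eqE.symm v := by
      have hbu : b i0 = ((‖eqE.symm u‖ : ℂ))⁻¹ • eqE.symm u := hb i0 rfl
      have hcv : c i0 = ((‖eqE.symm v‖ : ℂ))⁻¹ • eqE.symm v := hc i0 rfl
      have hne : ((‖eqE.symm u‖ : ℂ)) ≠ 0 := by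
        exact_mod_cast norm_ne_zero_iff.mpr huE
      have hne' : ((‖eqE.symm v‖ : ℂ)) ≠ 0 := by
        exact_mod_cast norm_ne_zero_iff.mpr hvE
      have hu' : eqE.symm u = (‖eqE.symm u‖ : ℂ) • b i0 := by
        rw [hbu, smul_smul, mul_inv_cancel₀ hne, one_smul]
      rw [hu', _root_.map_smul, hTb, hcv, smul_smul, hnorm, mul_inv_cancel₀ hne', one_smul]
    let f : (ι → ℂ) →ₗ[ℂ] (ι → ℂ) :=
      eqE.toLinearMap ∘ₗ T.toLinearEquiv.toLinearMap ∘ₗ eqE.symm.toLinearMap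
    have hfx : ∀ x : ι → ℂ, (LinearMap.toMatrix' f) *ᵥ x = eqE (T (eqE.symm x)) := by
      intro x
      rw [show (LinearMap.toMatrix' f) *ᵥ x = Matrix.toLin' (LinearMap.toMatrix' f) x from
        (Matrix.toLin'_apply _ _).symm, Matrix.toLin'_toMatrix']
      rfl
    have hUU : (LinearMap.toMatrix' f)ᴴ * (LinearMap.toMatrix' f) = 1 := by
      ext i j
      have key : ((LinearMap.toMatrix' f)ᴴ * (LinearMap.toMatrix' f)) i j =
          star ((LinearMap.toMatrix' f) *ᵥ Pi.single i 1) ⬝ᵥ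
            ((LinearMap.toMatrix' f) *ᵥ Pi.single j 1) := by
        simp [Matrix.mul_apply, Matrix.conjTranspose_apply, dotProduct,
          Matrix.mulVec_single]
      rw [key, hfx, hfx, ← hinner, T.inner_map_map, hinner]
      simp only [LinearEquiv.apply_symm_apply]
      have hst : star (Pi.single i 1 : ι → ℂ) = Pi.single i 1 := by
        funext k
        rcases eq_or_ne k i with rfl | hk
        · simp
        · simp [Pi.single_eq_of_ne hk]
      rw [hst, single_dotProduct, one_mul, Matrix.one_apply, Pi.single_apply]
    refine ⟨LinearMap.toMatrix' f, mul_eq_one_comm.mp hUU, hUU, ?_⟩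
    rw [hfx, hT]
    simp

open scoped MatrixOrder in
lemma exists_factor {M : Matrix ι ι ℂ} (hM : M.PosDef) (z w : ι → ℂ)
    (h : star w ⬝ᵥ w = star z ⬝ᵥ (M⁻¹ *ᵥ z)) :
    ∃ C : Matrix ι ι ℂ, C * Cᴴ = M ∧ IsUnit C ∧ C *ᵥ w = z := by
  classical
  let A := CFC.sqrt M
  have hAH : A.IsHermitian := (CFC.sqrt_nonneg M).posSemidef.1
  have hAA : A * A = M := CFC.sqrt_mul_sqrt_self M hM.posSemidef.nonneg
  have hdet : IsUnit A.det := by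
    have hm : A.det * A.det = M.det := by rw [← Matrix.det_mul, hAA]
    have hMdet : M.det ≠ 0 := hM.det_pos.ne'
    rw [isUnit_iff_ne_zero]
    intro h0
    exact hMdet (by rw [← hm, h0, zero_mul])
  have hAunit : IsUnit A := (Matrix.isUnit_iff_isUnit_det A).mpr hdet
  have hAinv : (A⁻¹)ᴴ = A⁻¹ := by
    rw [Matrix.conjTranspose_nonsing_inv, hAH.eq]
  have hMinv : A⁻¹ * A⁻¹ = M⁻¹ := by
    rw [← Matrix.mul_inv_rev, hAA]
  have hvv : star w ⬝ᵥ w = star (A⁻¹ *ᵥ z) ⬝ᵥ (A⁻¹ *ᵥ z) := by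
    rw [h, star_mulVec, hAinv, Matrix.dotProduct_mulVec, Matrix.dotProduct_mulVec,
      Matrix.vecMul_vecMul, hMinv]
  obtain ⟨U, hU1, hU2, hUw⟩ := exists_unitary w (A⁻¹ *ᵥ z) hvv
  refine ⟨A * U, ?_, ?_, ?_⟩
  · rw [Matrix.conjTranspose_mul, Matrix.mul_assoc, ← Matrix.mul_assoc U, hU1,
      Matrix.one_mul, hAH.eq, hAA]
  · exact hAunit.mul ⟨⟨U, Uᴴ, hU1, hU2⟩, rfl⟩
  · rw [← Matrix.mulVec_mulVec, hUw, Matrix.mulVec_mulVec, Matrix.mul_nonsing_inv A hdet,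
      Matrix.one_mulVec]

end Helpers

section Blocks

variable {m n : Type*} [Fintype m] [Fintype n] [DecidableEq m] [DecidableEq n]

lemma posDef_toBlocks₂₂ {S : Matrix (m ⊕ n) (m ⊕ n) ℂ} (hS : S.PosDef) :
    S.toBlocks₂₂.PosDef := by
  refine Matrix.posDef_iff_dotProduct_mulVec.mpr ⟨?_, ?_⟩
  · ext i j
    have := congrFun (congrFun hS.1 (Sum.inr i)) (Sum.inr j)
    simpa [Matrix.conjTranspose_apply, Matrix.toBlocks₂₂] using this
  · intro x hx
    have hx' : (Sum.elim 0 x : m ⊕ n → ℂ) ≠ 0 := by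
      intro h0
      apply hx
      funext i
      exact congrFun h0 (Sum.inr i)
    have hpos := hS.dotProduct_mulVec_pos hx'
    have hrw : star (Sum.elim (0 : m → ℂ) x) ⬝ᵥ S *ᵥ Sum.elim 0 x =
        star x ⬝ᵥ S.toBlocks₂₂ *ᵥ x := by
      rw [← Matrix.fromBlocks_toBlocks S, Matrix.fromBlocks_mulVec,
        Function.star_sumElim, sumElim_dotProduct_sumElim]
      simp [Matrix.toBlocks_fromBlocks₂₂]
    rwa [hrw] at hpos

lemma posDef_schur {S : Matrix (m ⊕ n) (m ⊕ n) ℂ} (hS : S.PosDef) :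
    (S.toBlocks₁₁ - S.toBlocks₁₂ * S.toBlocks₂₂⁻¹ * S.toBlocks₂₁).PosDef := by
  have hD := posDef_toBlocks₂₂ hS
  haveI : Invertible S.toBlocks₂₂ :=
    S.toBlocks₂₂.invertibleOfIsUnitDet (isUnit_iff_ne_zero.mpr hD.det_pos.ne')
  have h21 : S.toBlocks₂₁ = (S.toBlocks₁₂)ᴴ := by
    ext i j
    have := congrFun (congrFun hS.1 (Sum.inr i)) (Sum.inl j)
    simpa [Matrix.conjTranspose_apply, Matrix.toBlocks₂₁, Matrix.toBlocks₁₂] using this.symm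
  refine Matrix.posDef_iff_dotProduct_mulVec.mpr ⟨?_, ?_⟩
  · have h1 : (S.toBlocks₁₁).IsHermitian := by
      ext i j
      have := congrFun (congrFun hS.1 (Sum.inl i)) (Sum.inl j)
      simpa [Matrix.conjTranspose_apply, Matrix.toBlocks₁₁] using this
    have h2 : (S.toBlocks₁₂ * S.toBlocks₂₂⁻¹ * S.toBlocks₂₁).IsHermitian := by
      rw [h21]
      exact Matrix.isHermitian_mul_mul_conjTranspose _ hD.1.inv
    exact h1.sub h2
  · intro x hx
    set y : n → ℂ := -((S.toBlocks₂₂⁻¹ * (S.toBlocks₁₂)ᴴ) *ᵥ x) with hy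
    have hx' : (Sum.elim x y : m ⊕ n → ℂ) ≠ 0 := by
      intro h0
      apply hx
      funext i
      exact congrFun h0 (Sum.inl i)
    have hpos := hS.dotProduct_mulVec_pos hx'
    rw [Matrix.dotProduct_mulVec] at hpos
    have hSrw : S = Matrix.fromBlocks S.toBlocks₁₁ S.toBlocks₁₂ (S.toBlocks₁₂)ᴴ S.toBlocks₂₂ := by
      rw [← h21, Matrix.fromBlocks_toBlocks]
    rw [hSrw, Matrix.schur_complement_eq₂₂ _ _ _ _ hD.1] at hpos
    have hzero : (S.toBlocks₂₂⁻¹ * (S.toBlocks₁₂)ᴴ) *ᵥ x + y = 0 := by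
      rw [hy]; simp
    rw [hzero] at hpos
    simp only [star_zero, Matrix.zero_vecMul, zero_dotProduct, zero_add] at hpos
    rwa [← Matrix.dotProduct_mulVec, ← h21] at hpos

lemma twoBlock {S : Matrix (m ⊕ n) (m ⊕ n) ℂ} (hSH : S.IsHermitian)
    {A : Matrix m m ℂ} {D : Matrix n n ℂ} {zα wα : m → ℂ} {zβ wβ : n → ℂ}
    (hA : A * Aᴴ = S.toBlocks₁₁ - S.toBlocks₁₂ * S.toBlocks₂₂⁻¹ * S.toBlocks₂₁)
    (hD : D * Dᴴ = S.toBlocks₂₂) (hDu : IsUnit D)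
    (hAv : A *ᵥ wα = zα - (S.toBlocks₁₂ * S.toBlocks₂₂⁻¹) *ᵥ zβ)
    (hDv : D *ᵥ wβ = zβ) :
    (Matrix.fromBlocks A (S.toBlocks₁₂ * (Dᴴ)⁻¹) 0 D) *
        (Matrix.fromBlocks A (S.toBlocks₁₂ * (Dᴴ)⁻¹) 0 D)ᴴ = S ∧
      (Matrix.fromBlocks A (S.toBlocks₁₂ * (Dᴴ)⁻¹) 0 D) *ᵥ Sum.elim wα wβ =
        Sum.elim zα zβ := by
  have hDdet : IsUnit D.det := (Matrix.isUnit_iff_isUnit_det D).mp hDu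
  have hDHdet : IsUnit Dᴴ.det := by
    rw [Matrix.det_conjTranspose]
    exact hDdet.star
  have h21 : S.toBlocks₂₁ = (S.toBlocks₁₂)ᴴ := by
    ext i j
    have := congrFun (congrFun hSH (Sum.inr i)) (Sum.inl j)
    simpa [Matrix.conjTranspose_apply, Matrix.toBlocks₂₁, Matrix.toBlocks₁₂] using this.symm
  have hBH : (S.toBlocks₁₂ * (Dᴴ)⁻¹)ᴴ = D⁻¹ * S.toBlocks₂₁ := by
    rw [Matrix.conjTranspose_mul, Matrix.conjTranspose_nonsing_inv,
      Matrix.conjTranspose_conjTranspose, h21]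
  have hinvrel : (Dᴴ)⁻¹ * D⁻¹ = S.toBlocks₂₂⁻¹ := by
    rw [← Matrix.mul_inv_rev, hD]
  constructor
  · rw [Matrix.fromBlocks_conjTranspose, Matrix.fromBlocks_multiply]
    have hBB : S.toBlocks₁₂ * (Dᴴ)⁻¹ * (S.toBlocks₁₂ * (Dᴴ)⁻¹)ᴴ =
        S.toBlocks₁₂ * S.toBlocks₂₂⁻¹ * S.toBlocks₂₁ := by
      rw [hBH, Matrix.mul_assoc (S.toBlocks₁₂), ← Matrix.mul_assoc ((Dᴴ)⁻¹), hinvrel,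
        ← Matrix.mul_assoc]
    have e11 : A * Aᴴ + S.toBlocks₁₂ * (Dᴴ)⁻¹ * (S.toBlocks₁₂ * (Dᴴ)⁻¹)ᴴ = S.toBlocks₁₁ := by
      rw [hBB, hA, sub_add_cancel]
    have e12 : A * (0 : Matrix n m ℂ)ᴴ + S.toBlocks₁₂ * (Dᴴ)⁻¹ * Dᴴ = S.toBlocks₁₂ := by
      rw [Matrix.conjTranspose_zero, Matrix.mul_zero, zero_add, Matrix.mul_assoc,
        Matrix.nonsing_inv_mul _ hDHdet, Matrix.mul_one]
    have e21 : (0 : Matrix n m ℂ) * Aᴴ + D * (S.toBlocks₁₂ * (Dᴴ)⁻¹)ᴴ = S.toBlocks₂₁ := by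
      rw [hBH, Matrix.zero_mul, zero_add, D.mul_nonsing_inv_cancel_left _ hDdet]
    have e22 : (0 : Matrix n m ℂ) * (0 : Matrix n m ℂ)ᴴ + D * Dᴴ = S.toBlocks₂₂ := by
      rw [Matrix.conjTranspose_zero, Matrix.zero_mul, zero_add, hD]
    rw [e11, e12, e21, e22, Matrix.fromBlocks_toBlocks]
  · rw [Matrix.fromBlocks_mulVec, Sum.elim_comp_inl, Sum.elim_comp_inr]
    have hwβ : wβ = D⁻¹ *ᵥ zβ := by
      rw [← hDv, Matrix.mulVec_mulVec, Matrix.nonsing_inv_mul _ hDdet, Matrix.one_mulVec]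
    have h1 : A *ᵥ wα + (S.toBlocks₁₂ * (Dᴴ)⁻¹) *ᵥ wβ = zα := by
      rw [hAv, hwβ, Matrix.mulVec_mulVec, Matrix.mul_assoc, hinvrel, sub_add_cancel]
    have h2 : (0 : Matrix n m ℂ) *ᵥ wα + D *ᵥ wβ = zβ := by
      rw [Matrix.zero_mulVec, zero_add, hDv]
    rw [h1, h2]

end Blocks

section Machinery

variable {t r q : ℕ}

lemma memG_fromBlocks {A : Matrix (Fin t) (Fin t) ℂ}
    {B : Matrix (Fin t) (Fin r ⊕ Fin q) ℂ} {A₂ : Matrix (Fin r) (Fin r) ℂ}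
    {B₂ : Matrix (Fin r) (Fin q) ℂ} {D₂ : Matrix (Fin q) (Fin q) ℂ}
    (hA : IsUnit A) (hA₂ : IsUnit A₂) (hD₂ : IsUnit D₂) :
    memG t r q (Matrix.fromBlocks A B 0 (Matrix.fromBlocks A₂ B₂ 0 D₂)) := by
  refine ⟨fun i j => by simp, fun i j => by simp, ?_, ?_, ?_⟩
  · have h : (Matrix.fromBlocks A B 0 (Matrix.fromBlocks A₂ B₂ 0 D₂)).submatrix
        Sum.inl Sum.inl = A := by
      ext i j; simp [Matrix.submatrix_apply]
    rw [h]; exact hA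
  · have h : (Matrix.fromBlocks A B 0 (Matrix.fromBlocks A₂ B₂ 0 D₂)).submatrix
        (Sum.inr ∘ Sum.inl) (Sum.inr ∘ Sum.inl) = A₂ := by
      ext i j; simp [Matrix.submatrix_apply]
    rw [h]; exact hA₂
  · have h : (Matrix.fromBlocks A B 0 (Matrix.fromBlocks A₂ B₂ 0 D₂)).submatrix
        (Sum.inr ∘ Sum.inr) (Sum.inr ∘ Sum.inr) = D₂ := by
      ext i j; simp [Matrix.submatrix_apply]
    rw [h]; exact hD₂

lemma memG_mul {G H : Matrix (Fin t ⊕ Fin r ⊕ Fin q) (Fin t ⊕ Fin r ⊕ Fin q) ℂ}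
    (hG : memG t r q G) (hH : memG t r q H) : memG t r q (G * H) := by
  obtain ⟨hG1, hG2, hG3, hG4, hG5⟩ := hG
  obtain ⟨hH1, hH2, hH3, hH4, hH5⟩ := hH
  refine ⟨fun i j => ?_, fun i j => ?_, ?_, ?_, ?_⟩
  · simp [Matrix.mul_apply, Fintype.sum_sum_type, hG1, hH1]
  · simp [Matrix.mul_apply, Fintype.sum_sum_type, hG1, hG2, hH2]
  · have h : (G * H).submatrix Sum.inl Sum.inl =
        G.submatrix Sum.inl Sum.inl * H.submatrix Sum.inl Sum.inl := by
      ext i j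
      simp [Matrix.mul_apply, Matrix.submatrix_apply, Fintype.sum_sum_type, hH1]
    rw [h]; exact hG3.mul hH3
  · have h : (G * H).submatrix (Sum.inr ∘ Sum.inl) (Sum.inr ∘ Sum.inl) =
        G.submatrix (Sum.inr ∘ Sum.inl) (Sum.inr ∘ Sum.inl) *
          H.submatrix (Sum.inr ∘ Sum.inl) (Sum.inr ∘ Sum.inl) := by
      ext i j
      simp [Matrix.mul_apply, Matrix.submatrix_apply, Fintype.sum_sum_type, hG1, hH2]
    rw [h]; exact hG4.mul hH4
  · have h : (G * H).submatrix (Sum.inr ∘ Sum.inr) (Sum.inr ∘ Sum.inr) =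
        G.submatrix (Sum.inr ∘ Sum.inr) (Sum.inr ∘ Sum.inr) *
          H.submatrix (Sum.inr ∘ Sum.inr) (Sum.inr ∘ Sum.inr) := by
      ext i j
      simp [Matrix.mul_apply, Matrix.submatrix_apply, Fintype.sum_sum_type, hG1, hG2]
    rw [h]; exact hG5.mul hH5

lemma memF_mulVec {G : Matrix (Fin t ⊕ Fin r ⊕ Fin q) (Fin t ⊕ Fin r ⊕ Fin q) ℂ}
    {f : Fin t ⊕ Fin r ⊕ Fin q → ℂ} (hG : memG t r q G) (hf : memF t r q f) :
    memF t r q (G *ᵥ f) := by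
  intro i
  simp [Matrix.mulVec, dotProduct, Fintype.sum_sum_type, hG.1, hf _]

/-- canonical vector depending only on the invariant -/
noncomputable def wvec (t r q : ℕ) (p : ℂ × ℂ) : Fin t ⊕ Fin r ⊕ Fin q → ℂ :=
  Sum.elim 0 (Sum.elim (fun i => if (i : ℕ) = 0 then ((Real.sqrt p.1.re : ℝ) : ℂ) else 0)
    (fun i => if (i : ℕ) = 0 then ((Real.sqrt p.2.re : ℝ) : ℂ) else 0))

lemma canon (t r q : ℕ) (hr : 1 ≤ r) (hq : 1 ≤ q)
    (z : Fin t ⊕ Fin r ⊕ Fin q → ℂ)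
    (S : Matrix (Fin t ⊕ Fin r ⊕ Fin q) (Fin t ⊕ Fin r ⊕ Fin q) ℂ) (hS : S.PosDef) :
    ∃ L f, memG t r q L ∧ memG t r q L⁻¹ ∧ IsUnit L ∧ memF t r q f ∧
      z = L *ᵥ wvec t r q (t1 z S) + f ∧ S = L * Lᴴ := by
  classical
  have hS' : (S.toBlocks₂₂ : Matrix (Fin r ⊕ Fin q) (Fin r ⊕ Fin q) ℂ).PosDef :=
    posDef_toBlocks₂₂ hS
  have hS33 : (S33 S).PosDef := posDef_toBlocks₂₂ hS'
  have hSdot : (Sdot S).PosDef := posDef_schur hS'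
  -- the invariants are real and nonnegative
  have hb_nonneg : 0 ≤ (t1 z S).2 := (hS33.inv).posSemidef.dotProduct_mulVec_nonneg (blk3 z)
  have ha_nonneg : 0 ≤ (t1 z S).1 := (hSdot.inv).posSemidef.dotProduct_mulVec_nonneg (zdot z S)
  obtain ⟨hbre, hbim⟩ := Complex.nonneg_iff.mp hb_nonneg
  obtain ⟨hare, haim⟩ := Complex.nonneg_iff.mp ha_nonneg
  have hbeq : (((t1 z S).2.re : ℝ) : ℂ) = (t1 z S).2 :=
    Complex.ext rfl (by simpa using hbim)
  have haeq : (((t1 z S).1.re : ℝ) : ℂ) = (t1 z S).1 :=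
    Complex.ext rfl (by simpa using haim)
  -- block-3 factor
  set c3 : ℂ := ((Real.sqrt (t1 z S).2.re : ℝ) : ℂ) with hc3
  set w3 : Fin q → ℂ := Pi.single (⟨0, hq⟩ : Fin q) c3 with hw3def
  have hw3 : star w3 ⬝ᵥ w3 = star (blk3 z) ⬝ᵥ ((S33 S)⁻¹ *ᵥ blk3 z) := by
    have hst : star w3 = Pi.single (⟨0, hq⟩ : Fin q) c3 := by
      funext k
      rcases eq_or_ne k (⟨0, hq⟩ : Fin q) with rfl | hk
      · simp [hw3def, hc3]
      · simp [hw3def, Pi.single_eq_of_ne hk]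
    rw [hst, single_dotProduct, hw3def, Pi.single_eq_same, hc3]
    rw [← Complex.ofReal_mul, Real.mul_self_sqrt hbre, hbeq]
    rfl
  obtain ⟨D, hDfac, hDu, hDw⟩ := exists_factor hS33 (blk3 z) w3 hw3
  -- block-2 factor
  set c2 : ℂ := ((Real.sqrt (t1 z S).1.re : ℝ) : ℂ) with hc2
  set w2 : Fin r → ℂ := Pi.single (⟨0, hr⟩ : Fin r) c2 with hw2def
  have hw2 : star w2 ⬝ᵥ w2 = star (zdot z S) ⬝ᵥ ((Sdot S)⁻¹ *ᵥ zdot z S) := by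
    have hst : star w2 = Pi.single (⟨0, hr⟩ : Fin r) c2 := by
      funext k
      rcases eq_or_ne k (⟨0, hr⟩ : Fin r) with rfl | hk
      · simp [hw2def, hc2]
      · simp [hw2def, Pi.single_eq_of_ne hk]
    rw [hst, single_dotProduct, hw2def, Pi.single_eq_same, hc2]
    rw [← Complex.ofReal_mul, Real.mul_self_sqrt hare, haeq]
    rfl
  obtain ⟨A₂, hA₂fac, hA₂u, hA₂w⟩ := exists_factor hSdot (zdot z S) w2 hw2
  -- inner two-block assembly on S.toBlocks₂₂
  have hA₂fac' : A₂ * A₂ᴴ = (S.toBlocks₂₂).toBlocks₁₁ -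
      (S.toBlocks₂₂).toBlocks₁₂ * ((S.toBlocks₂₂).toBlocks₂₂)⁻¹ *
        (S.toBlocks₂₂).toBlocks₂₁ := hA₂fac
  have hDfac' : D * Dᴴ = (S.toBlocks₂₂).toBlocks₂₂ := hDfac
  have hA₂v : A₂ *ᵥ w2 = blk2 z -
      ((S.toBlocks₂₂).toBlocks₁₂ * ((S.toBlocks₂₂).toBlocks₂₂)⁻¹) *ᵥ blk3 z := hA₂w
  obtain ⟨hL₂fac, hL₂vec⟩ := twoBlock hS'.1 hA₂fac' hDfac' hDu hA₂v hDw
  set L₂ : Matrix (Fin r ⊕ Fin q) (Fin r ⊕ Fin q) ℂ :=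
    Matrix.fromBlocks A₂ ((S.toBlocks₂₂).toBlocks₁₂ * (Dᴴ)⁻¹) 0 D with hL₂def
  have hL₂u : IsUnit L₂ := Matrix.isUnit_fromBlocks_zero₂₁.mpr ⟨hA₂u, hDu⟩
  -- outer two-block assembly
  have hschur : (S.toBlocks₁₁ - S.toBlocks₁₂ * S.toBlocks₂₂⁻¹ * S.toBlocks₂₁).PosDef :=
    posDef_schur hS
  obtain ⟨A₁, hA₁fac, hA₁u, -⟩ := exists_factor hschur (0 : Fin t → ℂ) 0 (by simp)
  have hA₁v : A₁ *ᵥ (0 : Fin t → ℂ) =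
      ((S.toBlocks₁₂ * S.toBlocks₂₂⁻¹) *ᵥ Sum.elim (blk2 z) (blk3 z)) -
        (S.toBlocks₁₂ * S.toBlocks₂₂⁻¹) *ᵥ Sum.elim (blk2 z) (blk3 z) := by
    rw [Matrix.mulVec_zero, sub_self]
  obtain ⟨hLfac, hLvec⟩ := twoBlock hS.1 hA₁fac hL₂fac hL₂u hA₁v hL₂vec
  set L : Matrix (Fin t ⊕ Fin r ⊕ Fin q) (Fin t ⊕ Fin r ⊕ Fin q) ℂ :=
    Matrix.fromBlocks A₁ (S.toBlocks₁₂ * (L₂ᴴ)⁻¹) 0 L₂ with hLdef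
  have hLu : IsUnit L := Matrix.isUnit_fromBlocks_zero₂₁.mpr ⟨hA₁u, hL₂u⟩
  -- relation between wvec and the singles
  have hwv : wvec t r q (t1 z S) = Sum.elim (0 : Fin t → ℂ) (Sum.elim w2 w3) := by
    funext i
    rcases i with i | i
    · rfl
    rcases i with i | i
    · simp [wvec, hw2def, hc2, Pi.single_apply, Fin.ext_iff, eq_comm]
    · simp [wvec, hw3def, hc3, Pi.single_apply, Fin.ext_iff, eq_comm]
  have hLw : L *ᵥ wvec t r q (t1 z S) =
      Sum.elim ((S.toBlocks₁₂ * S.toBlocks₂₂⁻¹) *ᵥ Sum.elim (blk2 z) (blk3 z))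
        (Sum.elim (blk2 z) (blk3 z)) := by
    rw [hwv]; exact hLvec
  refine ⟨L, z - L *ᵥ wvec t r q (t1 z S), ?_, ?_, hLu, ?_, ?_, hLfac.symm⟩
  · exact memG_fromBlocks hA₁u hA₂u hDu
  · have hLinv : L⁻¹ = Matrix.fromBlocks A₁⁻¹
        (-(A₁⁻¹ * (S.toBlocks₁₂ * (L₂ᴴ)⁻¹) * L₂⁻¹)) 0 L₂⁻¹ :=
      Matrix.inv_fromBlocks_zero₂₁_of_isUnit_iff _ _ _ (iff_of_true hA₁u hL₂u)
    have hL₂inv : L₂⁻¹ = Matrix.fromBlocks A₂⁻¹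
        (-(A₂⁻¹ * ((S.toBlocks₂₂).toBlocks₁₂ * (Dᴴ)⁻¹) * D⁻¹)) 0 D⁻¹ :=
      Matrix.inv_fromBlocks_zero₂₁_of_isUnit_iff _ _ _ (iff_of_true hA₂u hDu)
    rw [hLinv, hL₂inv]
    exact memG_fromBlocks (Matrix.isUnit_nonsing_inv_iff.mpr hA₁u)
      (Matrix.isUnit_nonsing_inv_iff.mpr hA₂u) (Matrix.isUnit_nonsing_inv_iff.mpr hDu)
  · intro i
    have hi : (L *ᵥ wvec t r q (t1 z S)) (Sum.inr i) = z (Sum.inr i) := by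
      rw [hLw]
      rcases i with j | j <;> rfl
    simp [hi]
  · rw [add_comm, sub_add_cancel]

end Machinery

/-- Proposition 1 (maximality, case `m < N`): if `t₁(z,S) = t₁(z̄,S̄)` for Hermitian
positive definite `S`, `S̄`, then there is `(G,f) ∈ 𝓛` with `z = G z̄ + f` and
`S = G S̄ Gᴴ`. -/
theorem stmt3 (t r q : ℕ) (ht : 1 ≤ t) (hr : 1 ≤ r) (hq : 1 ≤ q)
    (z zb : Fin t ⊕ Fin r ⊕ Fin q → ℂ)
    (S Sb : Matrix (Fin t ⊕ Fin r ⊕ Fin q) (Fin t ⊕ Fin r ⊕ Fin q) ℂ)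
    (hS : S.PosDef) (hSb : Sb.PosDef)
    (heq : t1 z S = t1 zb Sb) :
    ∃ G : Matrix (Fin t ⊕ Fin r ⊕ Fin q) (Fin t ⊕ Fin r ⊕ Fin q) ℂ,
      ∃ f : Fin t ⊕ Fin r ⊕ Fin q → ℂ,
        memG t r q G ∧ memF t r q f ∧ z = G *ᵥ zb + f ∧ S = G * Sb * Gᴴ := by

  obtain ⟨L, f, hLmem, hLinvmem, hLu, hfmem, hz, hLS⟩ := canon t r q hr hq z S hS
  obtain ⟨L', f', hL'mem, hL'invmem, hL'u, hf'mem, hzb, hL'S⟩ := canon t r q hr hq zb Sb hSb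
  rw [← heq] at hzb
  have hL'det : IsUnit L'.det := (Matrix.isUnit_iff_isUnit_det _).mp hL'u
  have hGmem : memG t r q (L * L'⁻¹) := memG_mul hLmem hL'invmem
  refine ⟨L * L'⁻¹, f - (L * L'⁻¹) *ᵥ f', hGmem, ?_, ?_, ?_⟩
  · intro i
    simp [hfmem i, memF_mulVec hGmem hf'mem i]
  · have h1 : zb - f' = L' *ᵥ wvec t r q (t1 z S) := by
      rw [hzb, add_sub_cancel_right]
    have h2 : (L * L'⁻¹) *ᵥ (zb - f') = L *ᵥ wvec t r q (t1 z S) := by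
      rw [h1, Matrix.mulVec_mulVec, Matrix.nonsing_inv_mul_cancel_right _ _ hL'det]
    calc z = L *ᵥ wvec t r q (t1 z S) + f := hz
    _ = (L * L'⁻¹) *ᵥ (zb - f') + f := by rw [h2]
    _ = (L * L'⁻¹) *ᵥ zb - (L * L'⁻¹) *ᵥ f' + f := by rw [Matrix.mulVec_sub]
    _ = (L * L'⁻¹) *ᵥ zb + (f - (L * L'⁻¹) *ᵥ f') := by
        funext i; simp; ring
  · have hL'Hdet : IsUnit (L'ᴴ).det := by
      rw [Matrix.det_conjTranspose]; exact hL'det.star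
    rw [hL'S, hLS, Matrix.conjTranspose_mul, Matrix.conjTranspose_nonsing_inv]
    have e0 : L'⁻¹ * (L' * L'ᴴ) = L'ᴴ :=
      Matrix.nonsing_inv_mul_cancel_left _ _ hL'det
    have e1 : L * L'⁻¹ * (L' * L'ᴴ) = L * L'ᴴ := by
      rw [Matrix.mul_assoc, e0]
    have e2 : L'ᴴ * ((L'ᴴ)⁻¹ * Lᴴ) = Lᴴ :=
      Matrix.mul_nonsing_inv_cancel_left _ _ hL'Hdet
    rw [e1, Matrix.mul_assoc, e2]
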